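/- If Γ is a group of order 2n acting as an automorphism group of an HCS(2n+1) sharply transitively on all vertices but one (a 1-rotational action), then Γ contains exactly one element of order 2. -/

import Mathlib

open Pointwise

variable {V : Type*}

/-- The action of a permutation on a simple graph by relabelling vertices. -/
instance permGraphAction : MulAction (Equiv.Perm V) (SimpleGraph V) where
  smul σ H := H.map σ.toEmbedding
  one_smul H := by
    show H.map (1 : Equiv.Perm V).toEmbedding = H
    ext a b
    simp [SimpleGraph.map_adj]
  mul_smul σ τ H := by
    ext a b
    show (H.map (σ * τ).toEmbedding).Adj a b ↔ ((H.map τ.toEmbedding).map σ.toEmbedding).Adj a b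
    simp_rw [SimpleGraph.map_adj]
    simp only [SimpleGraph.map_adj, Equiv.coe_toEmbedding, Equiv.Perm.coe_mul,
      Function.comp_apply]
    constructor
    · rintro ⟨u, v, h, rfl, rfl⟩
      exact ⟨τ u, τ v, ⟨u, v, h, rfl, rfl⟩, rfl, rfl⟩
    · rintro ⟨-, -, ⟨u, v, h, rfl, rfl⟩, rfl, rfl⟩
      exact ⟨u, v, h, rfl, rfl⟩

lemma perm_smul_graph (σ : Equiv.Perm V) (H : SimpleGraph V) :
    σ • H = H.map σ.toEmbedding := rfl

/-- A Hamiltonian cycle of the complete graph on `V`: a connected, 2-regular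
(spanning) subgraph. -/
def IsHamCycle [Fintype V] (H : SimpleGraph V) : Prop :=
  H.Connected ∧ ∀ v : V, (H.neighborSet v).ncard = 2

/-- A Hamiltonian cycle system: a set of Hamiltonian cycles whose edge sets
partition the edge set of the complete graph. -/
def IsHCS [Fintype V] (𝓗 : Set (SimpleGraph V)) : Prop :=
  (∀ H ∈ 𝓗, IsHamCycle H) ∧
    ∀ e ∈ (⊤ : SimpleGraph V).edgeSet, ∃! H, H ∈ 𝓗 ∧ e ∈ H.edgeSet

/-- The full automorphism group of a Hamiltonian cycle system, as the subgroup
of vertex permutations preserving the set of cycles. -/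
def autHCS (𝓗 : Set (SimpleGraph V)) : Subgroup (Equiv.Perm V) :=
  MulAction.stabilizer (Equiv.Perm V) 𝓗

/-- The cycle graph traced by a map from `ZMod m` (consecutive residues are adjacent). -/
def cycleOn {W : Type*} (m : ℕ) (f : ZMod m → W) : SimpleGraph W :=
  SimpleGraph.fromRel (fun a b => ∃ i : ZMod m, f i = a ∧ f (i + 1) = b)

set_option linter.unusedSectionVars false

open Classical in
noncomputable def gnxt {V : Type*} (G : SimpleGraph V) (w v : V) : V :=
  if h : ∃ y, G.Adj v y ∧ y ≠ w then h.choose else v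

section Gnxt
variable {V : Type*} {G : SimpleGraph V}

lemma neighbors_pair (hreg : ∀ v, (G.neighborSet v).ncard = 2) (v : V) :
    ∃ a b : V, a ≠ b ∧ G.neighborSet v = {a, b} :=
  Set.ncard_eq_two.1 (hreg v)

lemma gnxt_spec (hreg : ∀ v, (G.neighborSet v).ncard = 2) {v w : V} (hvw : G.Adj v w) :
    G.Adj v (gnxt G w v) ∧ gnxt G w v ≠ w := by
  obtain ⟨a, b, hab, hS⟩ := neighbors_pair hreg v
  have hw : w ∈ ({a, b} : Set V) := by rw [← hS]; exact hvw
  have ha : G.Adj v a := by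
    have : a ∈ G.neighborSet v := by rw [hS]; exact Set.mem_insert _ _
    exact this
  have hb : G.Adj v b := by
    have : b ∈ G.neighborSet v := by rw [hS]; exact Set.mem_insert_of_mem _ rfl
    exact this
  have hex : ∃ y, G.Adj v y ∧ y ≠ w := by
    rcases hw with rfl | rfl
    · exact ⟨b, hb, hab.symm⟩
    · exact ⟨a, ha, hab⟩
  rw [gnxt, dif_pos hex]
  exact hex.choose_spec

lemma gnxt_unique (hreg : ∀ v, (G.neighborSet v).ncard = 2) {v w y : V}
    (hvw : G.Adj v w) (hy : G.Adj v y) (hne : y ≠ w) : y = gnxt G w v := by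
  obtain ⟨a, b, hab, hS⟩ := neighbors_pair hreg v
  have hmem : ∀ x : V, G.Adj v x → (x = a ∨ x = b) := by
    intro x hx
    have : x ∈ ({a, b} : Set V) := by rw [← hS]; exact hx
    exact this
  have h1 := (gnxt_spec hreg hvw).1
  have h2 := (gnxt_spec hreg hvw).2
  rcases hmem w hvw with hw | hw <;> rcases hmem y hy with hy' | hy' <;>
    rcases hmem _ h1 with hg | hg <;> subst hw <;> simp_all

end Gnxt

noncomputable def seqp {V : Type*} (G : SimpleGraph V) (z u : V) : ℕ → V
  | 0 => z
  | 1 => u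
  | (k+2) => gnxt G (seqp G z u k) (seqp G z u (k+1))

section Seqp
variable {V : Type*} {G : SimpleGraph V} {z u : V}

lemma seqp_zero : seqp G z u 0 = z := rfl
lemma seqp_one : seqp G z u 1 = u := rfl
lemma seqp_two (k : ℕ) : seqp G z u (k+2) = gnxt G (seqp G z u k) (seqp G z u (k+1)) := by
  rw [seqp]

variable (hreg : ∀ v, (G.neighborSet v).ncard = 2) (hzu : G.Adj z u)
include hreg hzu

lemma seqp_adj : ∀ k, G.Adj (seqp G z u k) (seqp G z u (k+1)) := by
  intro k
  induction k with
  | zero => exact hzu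
  | succ k ih =>
      rw [seqp_two]
      exact ((gnxt_spec hreg ih.symm).1)

lemma seqp_ne (k : ℕ) : seqp G z u (k+2) ≠ seqp G z u k := by
  rw [seqp_two]
  exact (gnxt_spec hreg (seqp_adj hreg hzu k).symm).2

lemma seqp_back (k : ℕ) : seqp G z u k = gnxt G (seqp G z u (k+2)) (seqp G z u (k+1)) :=
  gnxt_unique hreg (seqp_adj hreg hzu (k+1)) (seqp_adj hreg hzu k).symm
    (seqp_ne hreg hzu k).symm

/-- bounded determinism for sequences satisfying the `gnxt` recursion -/
lemma seq_det (a b : ℕ → V) (T : ℕ) (h0 : a 0 = b 0) (h1 : a 1 = b 1)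
    (ha : ∀ k, k + 2 ≤ T → a (k+2) = gnxt G (a k) (a (k+1)))
    (hb : ∀ k, k + 2 ≤ T → b (k+2) = gnxt G (b k) (b (k+1))) :
    ∀ k ≤ T, a k = b k := by
  intro k
  induction k using Nat.strong_induction_on with
  | _ k ih =>
    match k with
    | 0 => intro _; exact h0
    | 1 => intro _; exact h1
    | (k+2) =>
      intro hk
      rw [ha k hk, hb k hk, ih k (by omega) (by omega), ih (k+1) (by omega) (by omega)]

end Seqp

section Cycle
variable {V : Type*} [Fintype V] {G : SimpleGraph V} {z u : V}
variable (hreg : ∀ v, (G.neighborSet v).ncard = 2) (hzu : G.Adj z u)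
include hreg hzu

local notation "p" => seqp G z u

lemma pair_back {i d : ℕ}
    (h : (p (i+1), p (i+2)) = (p (i+1+d), p (i+2+d))) :
    (p i, p (i+1)) = (p (i+d), p (i+1+d)) := by
  obtain ⟨h1, h2⟩ := Prod.mk.injEq .. ▸ h
  have e1 : p i = gnxt G (p (i+2)) (p (i+1)) := seqp_back hreg hzu i
  have e2 : p (i+d) = gnxt G (p (i+d+2)) (p (i+d+1)) := seqp_back hreg hzu (i+d)
  have r1 : i + d + 2 = i + 2 + d := by omega
  have r2 : i + d + 1 = i + 1 + d := by omega
  rw [Prod.mk.injEq]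
  refine ⟨?_, h1⟩
  rw [e1, e2, r1, r2, h1, h2]

lemma pair_down : ∀ i d : ℕ, (p i, p (i+1)) = (p (i+d), p (i+1+d)) →
    (p 0, p 1) = (p d, p (1+d)) := by
  intro i
  induction i with
  | zero => intro d h; simpa using h
  | succ i ih =>
      intro d h
      apply ih
      have := pair_back hreg hzu (i := i) (d := d)
        (by rw [show i+1+1 = i+2 from rfl] at h ⊢; convert h using 3 <;> omega)
      convert this using 3 <;> omega

lemma exists_pair_period : ∃ d, 0 < d ∧ (p d, p (d+1)) = (p 0, p 1) := by
  classical
  have hfin : ∃ i j : ℕ, i ≠ j ∧ (p i, p (i+1)) = (p j, p (j+1)) := by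
    obtain ⟨i, j, hij, hmap⟩ :=
      Finite.exists_ne_map_eq_of_infinite (fun k : ℕ => (p k, p (k+1)))
    exact ⟨i, j, hij, hmap⟩
  obtain ⟨i, j, hij, hmap⟩ := hfin
  wlog hlt : i < j generalizing i j
  · exact this j i hij.symm hmap.symm (by omega)
  set d := j - i with hd
  have : (p i, p (i+1)) = (p (i+d), p (i+1+d)) := by
    convert hmap using 3 <;> omega
  have h0 := pair_down hreg hzu i d this
  refine ⟨d, by omega, ?_⟩
  rw [Prod.mk.injEq] at h0 ⊢
  exact ⟨h0.1.symm, by rw [show d+1 = 1+d by omega]; exact h0.2.symm⟩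

lemma period_all {d : ℕ} (h0 : p d = p 0) (h1 : p (d+1) = p 1) :
    ∀ k, p (k + d) = p k := by
  intro k
  refine seq_det (G := G) hreg hzu (fun m => p (m + d)) (fun m => p m) k
    (by show p (0+d) = p 0; rw [show 0+d = d by omega]; exact h0)
    (by show p (1+d) = p 1; rw [show 1+d = d+1 by omega]; exact h1) ?_ ?_ k le_rfl
  · intro m _
    show p (m+2+d) = gnxt G (p (m+d)) (p (m+1+d))
    rw [show m+2+d = (m+d)+2 by omega, seqp_two]
    congr 2
    omega
  · intro m _
    exact seqp_two m


section MinPeriod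
variable {M : ℕ} (hM0 : 0 < M) (hMz : seqp G z u M = z) (hMu : seqp G z u (M+1) = u)
include hM0 hMz hMu

lemma period_M : ∀ k, p (k + M) = p k :=
  period_all hreg hzu (by rw [hMz]; rfl) (by rw [hMu]; rfl)

lemma period_mul : ∀ q r, p (r + q * M) = p r := by
  intro q
  induction q with
  | zero => simp
  | succ q ih =>
      intro r
      rw [show r + (q+1)*M = (r + q*M) + M by ring, period_M hreg hzu hM0 hMz hMu, ih]

lemma pmod : ∀ m, p (m % M) = p m := by
  intro m
  conv_rhs => rw [← Nat.mod_add_div' m M]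
  rw [period_mul hreg hzu hM0 hMz hMu]

lemma M_ge_three : 3 ≤ M := by
  rcases Nat.lt_or_ge M 3 with h | h
  · interval_cases M
    · exact absurd hMz.symm hzu.ne
    · exact absurd hMz (seqp_ne hreg hzu 0)
  · exact h

lemma nomirror (T : ℕ) (hT : 2 ≤ T) (hz : p T = p 0) (hu : p (T-1) = p 1) : False := by
  have hrev : ∀ k ≤ T, p (T - k) = p k := by
    refine seq_det hreg hzu (fun k => p (T - k)) (fun k => p k) T (by simpa using hz)
      (by show p (T-1) = p 1; exact hu) ?_ ?_
    · intro k hk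
      show p (T-(k+2)) = gnxt G (p (T-k)) (p (T-(k+1)))
      rw [seqp_back hreg hzu (T-(k+2)), show T-(k+2)+2 = T-k by omega,
        show T-(k+2)+1 = T-(k+1) by omega]
    · intro k _
      exact seqp_two k
  rcases Nat.even_or_odd T with ⟨c, hc⟩ | ⟨c, hc⟩
  · have h := hrev (c-1) (by omega)
    rw [show T - (c-1) = (c-1)+2 by omega] at h
    exact seqp_ne hreg hzu (c-1) h
  · have h := hrev c (by omega)
    rw [show T - c = c + 1 by omega] at h
    exact (seqp_adj hreg hzu c).ne h.symm

variable (hMmin : ∀ d, 0 < d → seqp G z u d = z → seqp G z u (d+1) = u → M ≤ d)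
include hMmin

lemma seqp_inj : ∀ i j, i < M → j < M → p i = p j → i = j := by
  intro i j hi hj hij
  by_contra hne
  wlog hlt : i < j generalizing i j
  · exact this j i hj hi hij.symm (Ne.symm hne) (by omega)
  have hab : p (i + M) = p j := by
    rw [period_M hreg hzu hM0 hMz hMu]; exact hij
  have hj1 : 1 ≤ j := by omega
  have hadjm : G.Adj (p j) (p (j-1)) := by
    have := seqp_adj hreg hzu (j-1)
    rw [show j-1+1 = j by omega] at this
    exact this.symm
  have hadjp : G.Adj (p j) (p (j+1)) := seqp_adj hreg hzu j
  have hb_adj : G.Adj (p j) (p (i+M+1)) := by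
    rw [← hab]; exact seqp_adj hreg hzu (i+M)
  by_cases hcase : p (i+M+1) = p (j-1)
  · -- mirror case: leads to nomirror contradiction
    have hmir : ∀ k ≤ j, p (i+M+k) = p (j - k) := by
      refine seq_det hreg hzu (fun k => p (i+M+k)) (fun k => p (j-k)) j
        (by simpa using hab) (by show p (i+M+1) = p (j-1); exact hcase) ?_ ?_
      · intro k _
        show p (i+M+(k+2)) = gnxt G (p (i+M+k)) (p (i+M+(k+1)))
        rw [show i+M+(k+2) = (i+M+k)+2 by omega, seqp_two,
          show i+M+k+1 = i+M+(k+1) by omega]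
      · intro k hk
        show p (j-(k+2)) = gnxt G (p (j-k)) (p (j-(k+1)))
        rw [seqp_back hreg hzu (j-(k+2)), show j-(k+2)+2 = j-k by omega,
          show j-(k+2)+1 = j-(k+1) by omega]
    have h1 := hmir j le_rfl
    have h2 := hmir (j-1) (by omega)
    rw [show j - (j-1) = 1 by omega] at h2
    rw [Nat.sub_self] at h1
    exact nomirror hreg hzu hM0 hMz hMu (i+M+j) (by omega) h1
      (by rw [show i+M+j-1 = i+M+(j-1) by omega]; exact h2)
  · -- translation case: contradicts minimality
    have hnext : p (i+M+1) = p (j+1) := by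
      rw [gnxt_unique hreg hadjm hb_adj hcase]
      refine (gnxt_unique hreg hadjm hadjp ?_).symm
      have := seqp_ne hreg hzu (j-1)
      rw [show j-1+2 = j+1 by omega] at this
      exact this
    have hpair : (p j, p (j+1)) = (p (j+(i+M-j)), p (j+1+(i+M-j))) := by
      rw [Prod.mk.injEq, show j+(i+M-j) = i+M by omega, show j+1+(i+M-j) = i+M+1 by omega]
      exact ⟨hab.symm, hnext.symm⟩
    have h0 := pair_down hreg hzu j (i+M-j) hpair
    rw [Prod.mk.injEq] at h0
    have hle := hMmin (i+M-j) (by omega) (by rw [← h0.1]; rfl)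
      (by rw [show i+M-j+1 = 1+(i+M-j) by omega, ← h0.2]; rfl)
    omega

end MinPeriod

section MinPeriod2
variable {M : ℕ} (hM0 : 0 < M) (hMz : seqp G z u M = z) (hMu : seqp G z u (M+1) = u)
include hM0 hMz hMu

lemma seqp_surj (hconn : G.Connected) : ∀ x, ∃ k, p k = x := by
  have closed : ∀ x y, G.Adj x y → (∃ k, p k = x) → (∃ k, p k = y) := by
    rintro x y hxy ⟨k, rfl⟩
    have hk' : p (k + M) = p k := period_M hreg hzu hM0 hMz hMu k
    have hadjm : G.Adj (p (k+M)) (p (k+M-1)) := by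
      have := seqp_adj hreg hzu (k+M-1)
      rw [show k+M-1+1 = k+M by omega] at this
      exact this.symm
    by_cases hy : y = p (k+M-1)
    · exact ⟨k+M-1, hy.symm⟩
    · have : y = gnxt G (p (k+M-1)) (p (k+M)) :=
        gnxt_unique hreg hadjm (by rw [hk']; exact hxy) hy
      refine ⟨k+M+1, ?_⟩
      rw [show k+M+1 = (k+M-1)+2 by omega, seqp_two, show k+M-1+1 = k+M by omega]
      exact this.symm
  suffices h : ∀ (a b : V) (_ : G.Walk a b), (∃ k, p k = a) → (∃ k, p k = b) by
    intro x
    obtain ⟨w⟩ := hconn.preconnected z x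
    exact h z x w ⟨0, rfl⟩
  intro a b w
  induction w with
  | nil => exact id
  | cons h q ih => exact fun ha => ih (closed _ _ h ha)

variable (hMmin : ∀ d, 0 < d → seqp G z u d = z → seqp G z u (d+1) = u → M ≤ d)
include hMmin

lemma card_eq_M (hconn : G.Connected) : Fintype.card V = M := by
  have hbij : Function.Bijective (fun i : Fin M => p i.val) := by
    constructor
    · intro a b hab
      exact Fin.ext (seqp_inj hreg hzu hM0 hMz hMu hMmin _ _ a.isLt b.isLt hab)
    · intro x
      obtain ⟨k, hk⟩ := seqp_surj hreg hzu hM0 hMz hMu hconn x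
      refine ⟨⟨k % M, Nat.mod_lt _ hM0⟩, ?_⟩
      show p (k % M) = x
      rw [pmod hreg hzu hM0 hMz hMu, hk]
  have := Fintype.card_of_bijective hbij
  rw [Fintype.card_fin] at this
  exact this.symm

omit hMmin

lemma seqp_reflect (σ : Equiv.Perm V) (hσ : ∀ a b, G.Adj (σ a) (σ b) ↔ G.Adj a b)
    (hz : σ z = z) (hu : σ u = p (M-1)) : ∀ k ≤ M, σ (p k) = p (M - k) := by
  have hequi : ∀ x w, G.Adj x w → σ (gnxt G w x) = gnxt G (σ w) (σ x) := by
    intro x w hxw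
    refine gnxt_unique hreg ((hσ _ _).2 hxw) ((hσ _ _).2 (gnxt_spec hreg hxw).1)
      (fun hh => (gnxt_spec hreg hxw).2 (σ.injective hh))
  refine seq_det hreg hzu (fun k => σ (p k)) (fun k => p (M - k)) M
    (by show σ (p 0) = p (M - 0); rw [Nat.sub_zero]; show σ z = p M; rw [hz, hMz])
    (by show σ (p 1) = p (M - 1); exact hu) ?_ ?_
  · intro k _
    show σ (p (k+2)) = gnxt G (σ (p k)) (σ (p (k+1)))
    rw [seqp_two]
    exact hequi _ _ (seqp_adj hreg hzu k).symm
  · intro k hk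
    show p (M-(k+2)) = gnxt G (p (M-k)) (p (M-(k+1)))
    rw [seqp_back hreg hzu (M-(k+2)), show M-(k+2)+2 = M-k by omega,
      show M-(k+2)+1 = M-(k+1) by omega]

end MinPeriod2
end Cycle

/-- In a connected 2-regular graph on an odd number of vertices, with an automorphism `σ`
whose unique fixed point is `z`, there is (up to the swap) at most one edge of the
form `{x, σ x}`. -/
lemma unique_swapped {V : Type*} [Fintype V] {G : SimpleGraph V}
    (hconn : G.Connected) (hreg : ∀ v, (G.neighborSet v).ncard = 2)
    (hodd : Odd (Fintype.card V)) (σ : Equiv.Perm V)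
    (hσ : ∀ a b, G.Adj (σ a) (σ b) ↔ G.Adj a b)
    (z : V) (hfix : ∀ x : V, σ x = x ↔ x = z)
    {x y : V} (hx : G.Adj x (σ x)) (hy : G.Adj y (σ y)) : y = x ∨ y = σ x := by
  classical
  obtain ⟨u, hzu⟩ : (G.neighborSet z).Nonempty :=
    Set.nonempty_of_ncard_ne_zero (by rw [hreg]; omega)
  have hzu : G.Adj z u := hzu
  obtain ⟨d₀, hd₀⟩ := exists_pair_period hreg hzu
  have hQ : ∃ d, 0 < d ∧ seqp G z u d = z ∧ seqp G z u (d+1) = u :=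
    ⟨d₀, hd₀.1, congrArg Prod.fst hd₀.2, congrArg Prod.snd hd₀.2⟩
  set M := Nat.find hQ with hMdef
  obtain ⟨hM0, hMz, hMu⟩ := Nat.find_spec hQ
  have hMmin : ∀ d, 0 < d → seqp G z u d = z → seqp G z u (d+1) = u → M ≤ d :=
    fun d h1 h2 h3 => Nat.find_le ⟨h1, h2, h3⟩
  have hMcard : Fintype.card V = M :=
    card_eq_M hreg hzu hM0 hMz hMu hMmin hconn
  have hModd : Odd M := hMcard ▸ hodd
  have hM3 : 3 ≤ M := M_ge_three hreg hzu hM0 hMz hMu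
  haveI : NeZero M := ⟨by omega⟩
  have hz : σ z = z := (hfix z).2 rfl
  have hv : G.Adj z (σ u) := by
    have := (hσ z u).2 hzu
    rwa [hz] at this
  have hvne : σ u ≠ u := fun hh => hzu.ne ((hfix u).1 hh).symm
  have hM1adj : G.Adj z (seqp G z u (M-1)) := by
    have := seqp_adj hreg hzu (M-1)
    rw [show M-1+1 = M by omega, hMz] at this
    exact this.symm
  have hM1ne : seqp G z u (M-1) ≠ u := by
    have := seqp_ne hreg hzu (M-1)
    rw [show M-1+2 = M+1 by omega, hMu] at this
    exact fun hh => this hh.symm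
  have hσu : σ u = seqp G z u (M-1) := by
    rw [gnxt_unique hreg hzu hv hvne]
    exact (gnxt_unique hreg hzu hM1adj hM1ne).symm
  have hrefl := seqp_reflect hreg hzu hM0 hMz hMu σ hσ hz hσu
  have hcast : ∀ a b : ℕ, seqp G z u a = seqp G z u b ↔ (a : ZMod M) = (b : ZMod M) := by
    intro a b
    rw [ZMod.natCast_eq_natCast_iff']
    constructor
    · intro hpq
      exact seqp_inj hreg hzu hM0 hMz hMu hMmin _ _ (Nat.mod_lt _ hM0) (Nat.mod_lt _ hM0)
        (by rw [pmod hreg hzu hM0 hMz hMu, pmod hreg hzu hM0 hMz hMu]; exact hpq)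
    · intro hpq
      rw [← pmod hreg hzu hM0 hMz hMu a, ← pmod hreg hzu hM0 hMz hMu b, hpq]
  have hgetidx : ∀ w : V, G.Adj w (σ w) →
      ∃ i, 1 ≤ i ∧ i < M ∧ w = seqp G z u i ∧
        ((2*i : ZMod M) = 1 ∨ (2*i : ZMod M) = -1) := by
    intro w hw
    obtain ⟨k, hk⟩ := seqp_surj hreg hzu hM0 hMz hMu hconn w
    set i := k % M with hidef
    have hiM : i < M := Nat.mod_lt _ hM0
    have hpi : seqp G z u i = w := by
      rw [pmod hreg hzu hM0 hMz hMu]; exact hk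
    have hi0 : i ≠ 0 := by
      intro h0
      rw [h0] at hpi
      have hwz : w = z := hpi.symm
      rw [hwz, hz] at hw
      exact G.irrefl hw
    have hadjw : G.Adj (seqp G z u i) (seqp G z u (M - i)) := by
      rw [← hrefl i (by omega), hpi]
      exact hw
    have hadjm : G.Adj (seqp G z u i) (seqp G z u (i-1)) := by
      have := seqp_adj hreg hzu (i-1)
      rw [show i-1+1 = i by omega] at this
      exact this.symm
    have hadjp : G.Adj (seqp G z u i) (seqp G z u (i+1)) := seqp_adj hreg hzu i
    have hMi : ((M - i : ℕ) : ZMod M) = -(i : ZMod M) := by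
      rw [Nat.cast_sub (by omega : i ≤ M), ZMod.natCast_self, zero_sub]
    refine ⟨i, by omega, hiM, hpi.symm, ?_⟩
    by_cases hc : seqp G z u (M - i) = seqp G z u (i-1)
    · left
      have hcc := (hcast _ _).1 hc
      rw [hMi, Nat.cast_sub (by omega : 1 ≤ i), Nat.cast_one] at hcc
      linear_combination -hcc
    · right
      have h1 : seqp G z u (M - i) = gnxt G (seqp G z u (i-1)) (seqp G z u i) :=
        gnxt_unique hreg hadjm hadjw.symm.symm hc
      have h2 : seqp G z u (i+1) = gnxt G (seqp G z u (i-1)) (seqp G z u i) := by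
        refine gnxt_unique hreg hadjm hadjp ?_
        have := seqp_ne hreg hzu (i-1)
        rw [show i-1+2 = i+1 by omega] at this
        exact this
      have hcc := (hcast (M - i) (i+1)).1 (h1.trans h2.symm)
      rw [hMi, Nat.cast_add, Nat.cast_one] at hcc
      linear_combination -hcc
  obtain ⟨i, hi1, hiM, hxe, hxi⟩ := hgetidx x hx
  obtain ⟨j, hj1, hjM, hye, hyj⟩ := hgetidx y hy
  have hσx : σ x = seqp G z u (M - i) := by rw [hxe]; exact hrefl i (by omega)
  have h2u : IsUnit (2 : ZMod M) := by
    rw [show (2 : ZMod M) = ((2:ℕ) : ZMod M) by push_cast; ring]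
    rw [ZMod.isUnit_iff_coprime]
    rw [Nat.Prime.coprime_iff_not_dvd Nat.prime_two]
    intro hdvd
    rw [Nat.odd_iff] at hModd
    omega
  have hMi : ((M - i : ℕ) : ZMod M) = -(i : ZMod M) := by
    rw [Nat.cast_sub (by omega : i ≤ M), ZMod.natCast_self, zero_sub]
  have hkey : (j : ZMod M) = (i : ZMod M) ∨ (j : ZMod M) = -(i : ZMod M) := by
    rcases hxi with h1 | h1 <;> rcases hyj with h2 | h2
    · left; exact h2u.mul_left_cancel (by rw [h1, h2])
    · right
      refine h2u.mul_left_cancel ?_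
      rw [h2, mul_neg, h1]
    · right
      refine h2u.mul_left_cancel ?_
      rw [h2, mul_neg, h1, neg_neg]
    · left; exact h2u.mul_left_cancel (by rw [h1, h2])
  rcases hkey with hji | hji
  · left
    rw [hye, hxe]
    exact (hcast j i).2 hji
  · right
    rw [hye, hσx]
    exact (hcast j (M - i)).2 (by rw [hMi, hji])

/-! ### Auxiliary material for the main theorem -/

def rho {Γ : Type*} [Group Γ] (g : Γ) : Equiv.Perm (Option Γ) :=
  Equiv.optionCongr (Equiv.mulRight g)

lemma rho_none {Γ : Type*} [Group Γ] (g : Γ) : rho g none = none := rfl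

lemma rho_some {Γ : Type*} [Group Γ] (g a : Γ) : rho g (some a) = some (a * g) := rfl

lemma rho_mul {Γ : Type*} [Group Γ] (g k : Γ) : rho g * rho k = rho (k * g) := by
  refine Equiv.ext fun x => ?_
  cases x with
  | none => rfl
  | some a => show some (a * k * g) = some (a * (k * g)); rw [mul_assoc]

lemma rho_one {Γ : Type*} [Group Γ] : rho (1 : Γ) = 1 := by
  refine Equiv.ext fun x => ?_
  cases x with
  | none => rfl
  | some a => show some (a * 1) = some a; rw [mul_one]

lemma smul_adj' {V : Type*} (σ : Equiv.Perm V) (H : SimpleGraph V) (a b : V) :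
    (σ • H).Adj (σ a) (σ b) ↔ H.Adj a b := by
  rw [perm_smul_graph]
  simp only [SimpleGraph.map_adj, Equiv.coe_toEmbedding]
  constructor
  · rintro ⟨-, c, d, hcd, hc, hd⟩
    rwa [σ.injective hc, σ.injective hd] at hcd
  · intro hab
    exact ⟨fun hh => hab.ne (σ.injective hh), a, b, hab, rfl, rfl⟩

/-- a group of order `2n` acting 1-rotationally on an HCS of order `2n+1`
(right translations, fixing `∞`, are automorphisms) has exactly one involution. -/
theorem one_rotational_group_binary {Γ : Type*} [Group Γ] [Fintype Γ]
    (n : ℕ) (hcard : Fintype.card Γ = 2 * n)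
    (𝓗 : Set (SimpleGraph (Option Γ))) (h : IsHCS 𝓗)
    (hrot : ∀ g : Γ, (Equiv.optionCongr (Equiv.mulRight g)) ∈ autHCS 𝓗) :
    ∃! x : Γ, orderOf x = 2 := by
  classical
  have hrot' : ∀ g : Γ, rho g • 𝓗 = 𝓗 := fun g => MulAction.mem_stabilizer_iff.mp (hrot g)
  have hmem : ∀ (g : Γ) (H : SimpleGraph (Option Γ)), H ∈ 𝓗 → rho g • H ∈ 𝓗 := by
    intro g H hH
    rw [← hrot' g]
    exact Set.smul_mem_smul_set hH
  -- the cycle through the edge {∞, 1}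
  obtain ⟨H₁, ⟨hH₁m, hH₁e⟩, huniq₁⟩ := h.2 s(none, some 1) (by simp)
  rw [SimpleGraph.mem_edgeSet] at hH₁e
  -- the second neighbour `t` of ∞ in H₁
  obtain ⟨A, B, hAB, hS⟩ := Set.ncard_eq_two.1 ((h.1 H₁ hH₁m).2 none)
  have hone : (some 1 : Option Γ) ∈ H₁.neighborSet none := hH₁e
  rw [hS] at hone
  simp only [Set.mem_insert_iff, Set.mem_singleton_iff] at hone
  have hother : ∃ c, c ≠ some 1 ∧ H₁.neighborSet none = {some 1, c} := by
    rcases hone with h1 | h1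
    · exact ⟨B, by rw [h1]; exact hAB.symm, by rw [hS, h1]⟩
    · exact ⟨A, by rw [h1]; exact hAB, by rw [hS, h1, Set.pair_comm]⟩
  obtain ⟨c, hc1, hcS⟩ := hother
  have hcmem : c ∈ H₁.neighborSet none := by
    rw [hcS]; exact Set.mem_insert_of_mem _ rfl
  have hcnone : c ≠ none := by
    intro hcn
    rw [hcn] at hcmem
    exact H₁.irrefl hcmem
  obtain ⟨t, rfl⟩ : ∃ t, c = some t := Option.ne_none_iff_exists'.1 hcnone
  have htne : t ≠ 1 := fun hh => hc1 (by rw [hh])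
  have hH₁t : H₁.Adj none (some t) := hcmem
  have hnbr : ∀ y, H₁.Adj none y → y = some 1 ∨ y = some t := by
    intro y hy
    have : y ∈ H₁.neighborSet none := hy
    rw [hcS] at this
    simpa using this
  -- ρ t fixes H₁
  have hfixt : rho t • H₁ = H₁ := by
    obtain ⟨K', hK', huK'⟩ := h.2 s(none, some t) (by simp)
    have h1 : rho t • H₁ ∈ 𝓗 ∧ s(none, some t) ∈ (rho t • H₁).edgeSet := by
      refine ⟨hmem t H₁ hH₁m, ?_⟩
      rw [SimpleGraph.mem_edgeSet]
      have := (smul_adj' (rho t) H₁ none (some 1)).2 hH₁e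
      rwa [rho_none, rho_some, one_mul] at this
    have h2 : H₁ ∈ 𝓗 ∧ s(none, some t) ∈ H₁.edgeSet := by
      refine ⟨hH₁m, ?_⟩
      rw [SimpleGraph.mem_edgeSet]
      exact hH₁t
    rw [huK' _ h1, huK' _ h2]
  -- t is an involution
  have htt : t * t = 1 := by
    have := (smul_adj' (rho t) H₁ none (some t)).2 hH₁t
    rw [rho_none, rho_some, hfixt] at this
    rcases hnbr _ this with h1 | h1
    · exact Option.some_injective _ h1
    · have : t * t = t * 1 := by rw [mul_one]; exact Option.some_injective _ h1
      exact absurd (mul_left_cancel this) htne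
  -- every involution is conjugate to t via an edge of H₁
  have claim : ∀ s : Γ, s ≠ 1 → s * s = 1 →
      ∃ b : Γ, H₁.Adj (some b) (some (b * t)) ∧ s = b * t * b⁻¹ := by
    intro s hs1 hss
    obtain ⟨K, ⟨hKm, hKe⟩, huK⟩ := h.2 s(some 1, some s)
      (by rw [SimpleGraph.mem_edgeSet, SimpleGraph.top_adj]
          exact fun hh => hs1 (Option.some_injective _ hh).symm)
    rw [SimpleGraph.mem_edgeSet] at hKe
    -- ρ s fixes K
    have hfixs : rho s • K = K := by
      have h1 : rho s • K ∈ 𝓗 ∧ s(some 1, some s) ∈ (rho s • K).edgeSet := by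
        refine ⟨hmem s K hKm, ?_⟩
        rw [SimpleGraph.mem_edgeSet]
        have := (smul_adj' (rho s) K (some 1) (some s)).2 hKe
        rw [rho_some, rho_some, one_mul, hss] at this
        exact this.symm
      have h2 : K ∈ 𝓗 ∧ s(some 1, some s) ∈ K.edgeSet := by
        refine ⟨hKm, ?_⟩
        rw [SimpleGraph.mem_edgeSet]
        exact hKe
      rw [huK _ h1, huK _ h2]
    -- a neighbour of ∞ in K
    obtain ⟨c, hcK⟩ : (K.neighborSet none).Nonempty :=
      Set.nonempty_of_ncard_ne_zero (by rw [(h.1 K hKm).2 none]; omega)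
    have hcadj : K.Adj none c := hcK
    obtain ⟨a, rfl⟩ : ∃ a, c = some a := by
      cases c with
      | none => exact absurd hcadj (K.irrefl)
      | some a => exact ⟨a, rfl⟩
    -- translating K back to H₁
    have hKH : rho a⁻¹ • K = H₁ := by
      apply huniq₁
      refine ⟨hmem _ _ hKm, ?_⟩
      rw [SimpleGraph.mem_edgeSet]
      have := (smul_adj' (rho a⁻¹) K none (some a)).2 hcadj
      rwa [rho_none, rho_some, mul_inv_cancel] at this
    have hρaH : rho a • H₁ = K := by
      rw [← hKH, ← mul_smul, rho_mul, inv_mul_cancel, rho_one, one_smul]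
    -- the conjugate a s a⁻¹ stabilizes H₁
    have hstab : rho (a * s * a⁻¹) • H₁ = H₁ := by
      have e1 : rho (a * s * a⁻¹) = rho a⁻¹ * rho s * rho a := by
        rw [rho_mul, rho_mul, mul_assoc]
      rw [e1, mul_smul, mul_smul, hρaH, hfixs, hKH]
    -- hence a s a⁻¹ = t
    have hg : a * s * a⁻¹ = t := by
      have := (smul_adj' (rho (a*s*a⁻¹)) H₁ none (some 1)).2 hH₁e
      rw [rho_none, rho_some, one_mul, hstab] at this
      rcases hnbr _ this with h1 | h1
      · refine absurd (Option.some_injective _ h1) (fun hh => hs1 ?_)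
        have : a⁻¹ * (a * s * a⁻¹) * a = a⁻¹ * 1 * a := by rw [hh]
        calc s = a⁻¹ * (a * s * a⁻¹) * a := by group
        _ = a⁻¹ * 1 * a := this
        _ = 1 := by group
      · exact Option.some_injective _ h1
    refine ⟨a⁻¹, ?_, by rw [← hg]; group⟩
    have := (smul_adj' (rho a⁻¹) K (some 1) (some s)).2 hKe
    rw [rho_some, rho_some, one_mul, hKH] at this
    have hsa : s * a⁻¹ = a⁻¹ * t := by rw [← hg]; group
    rwa [hsa] at this
  -- existence
  have hordt : orderOf t = 2 := by
    refine orderOf_eq_prime ?_ htne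
    rw [pow_two]; exact htt
  refine ⟨t, hordt, ?_⟩
  intro s hs
  have hs1 : s ≠ 1 := by
    intro hh
    rw [hh, orderOf_one] at hs
    omega
  have hss : s * s = 1 := by
    rw [← pow_two, ← hs]
    exact pow_orderOf_eq_one s
  obtain ⟨bs, hbs, hbse⟩ := claim s hs1 hss
  obtain ⟨bt, hbt, hbte⟩ := claim t htne htt
  -- set up the reflection lemma on H₁
  have hfixiff : ∀ x : Option Γ, rho t x = x ↔ x = none := by
    intro x
    cases x with
    | none => simp [rho_none]
    | some a =>
        rw [rho_some]
        constructor
        · intro hh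
          exact absurd (mul_eq_left.1 (Option.some_injective _ hh)) htne
        · intro hh
          exact absurd hh (by simp)
  have hσadj : ∀ a b : Option Γ, H₁.Adj (rho t a) (rho t b) ↔ H₁.Adj a b := by
    intro a b
    conv_lhs => rw [← hfixt]
    exact smul_adj' (rho t) H₁ a b
  have hoddcard : Odd (Fintype.card (Option Γ)) := by
    rw [Fintype.card_option, hcard]
    exact ⟨n, by ring⟩
  have hcyc := h.1 H₁ hH₁m
  have hres := unique_swapped hcyc.1 hcyc.2 hoddcard (rho t) hσadj none hfixiff
    (x := some bs) (y := some bt)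
    (by rw [rho_some]; exact hbs) (by rw [rho_some]; exact hbt)
  rcases hres with h1 | h1
  · have hbb : bt = bs := Option.some_injective _ h1
    calc s = bs * t * bs⁻¹ := hbse
    _ = bt * t * bt⁻¹ := by rw [hbb]
    _ = t := hbte.symm
  · rw [rho_some] at h1
    have hbb : bt = bs * t := Option.some_injective _ h1
    have h2 : t = (bs * t) * t * (bs * t)⁻¹ := by rw [← hbb]; exact hbte
    rw [hbse]
    conv_rhs => rw [h2]
    group
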